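/- There exists a constant c > 0 such that for every n ∈ ℕ there exist finite sets B, S ⊂ ℝ² with |S| ≥ n, such that for every (x,y) ∈ S there exists r > 0 with (x−r, y−r), (x+r, y−r), (x−r, y+r), (x+r, y+r) ∈ B, and such that |S| ≥ c·|B|^{4/3}. -/

import Mathlib

/-- The four vertices of the axes-parallel square with center `c` and radius `r`. -/
def sqVertices (c : ℝ × ℝ) (r : ℝ) : Set (ℝ × ℝ) :=
  {(c.1 - r, c.2 - r), (c.1 + r, c.2 - r), (c.1 - r, c.2 + r), (c.1 + r, c.2 + r)}

/-- Rotated embedding of integer points into the plane. -/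
noncomputable def Frot (p : ℤ × ℤ) : ℝ × ℝ :=
  (((p.1 + p.2 : ℤ) : ℝ), ((p.1 - p.2 : ℤ) : ℝ))

lemma Frot_inj : Function.Injective Frot := by
  rintro ⟨a, b⟩ ⟨c, d⟩ h
  simp only [Frot, Prod.mk.injEq] at h
  obtain ⟨h1, h2⟩ := h
  have h1' : a + b = c + d := by exact_mod_cast h1
  have h2' : a - b = c - d := by exact_mod_cast h2
  simp only [Prod.mk.injEq]
  omega

lemma main_construction (q : ℕ) : ∃ B S : Finset (ℝ × ℝ),
    S.card = q ^ 4 ∧ B.card ≤ 4 * q ^ 3 ∧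
    ∀ p ∈ S, ∃ r > (0:ℝ), sqVertices p r ⊆ (B : Set (ℝ × ℝ)) := by
  classical
  by_cases hq : q = 0
  · exact ⟨∅, ∅, by simp [hq], by simp, by simp⟩
  have hq0 : 0 < q := Nat.pos_of_ne_zero hq
  set Q : ℤ := (q : ℤ) with hQ
  set P3 : Finset (ℕ × ℕ × ℕ) := Finset.range q ×ˢ Finset.range q ×ˢ Finset.range q with hP3
  set B1 := P3.image (fun t => Frot (2*(t.1:ℤ) + t.2.1 - Q*t.2.2 - 2*Q^2, (t.2.1:ℤ) + Q*t.2.2)) with hB1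
  set B2 := P3.image (fun t => Frot (2*Q*(t.1:ℤ) + Q*t.2.2 - t.2.1 + 2*Q^2, (t.2.1:ℤ) + Q*t.2.2)) with hB2
  set B3 := P3.image (fun t => Frot ((t.1:ℤ) + Q*t.2.1, 2*(t.2.2:ℤ) + t.1 - Q*t.2.1 - 2*Q^2)) with hB3
  set B4 := P3.image (fun t => Frot ((t.1:ℤ) + Q*t.2.1, 2*Q*(t.2.2:ℤ) + Q*t.2.1 - t.1 + 2*Q^2)) with hB4
  set B := B1 ∪ B2 ∪ B3 ∪ B4 with hB
  set S := (Finset.range (q*q) ×ˢ Finset.range (q*q)).image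
      (fun ab : ℕ × ℕ => Frot ((ab.1:ℤ), (ab.2:ℤ))) with hS
  have hsub1 : B1 ⊆ B := by intro x hx; simp only [hB, Finset.mem_union]; tauto
  have hsub2 : B2 ⊆ B := by intro x hx; simp only [hB, Finset.mem_union]; tauto
  have hsub3 : B3 ⊆ B := by intro x hx; simp only [hB, Finset.mem_union]; tauto
  have hsub4 : B4 ⊆ B := by intro x hx; simp only [hB, Finset.mem_union]; tauto
  refine ⟨B, S, ?_, ?_, ?_⟩
  · -- card S
    have hinj : Function.Injective (fun ab : ℕ × ℕ => Frot ((ab.1:ℤ), (ab.2:ℤ))) := by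
      intro x y h
      have := Frot_inj h
      simp only [Prod.mk.injEq] at this
      obtain ⟨h1, h2⟩ := this
      have : x.1 = y.1 := by exact_mod_cast h1
      have : x.2 = y.2 := by exact_mod_cast h2
      exact Prod.ext ‹x.1 = y.1› ‹x.2 = y.2›
    rw [hS, Finset.card_image_of_injective _ hinj, Finset.card_product,
      Finset.card_range]
    ring
  · -- card B
    have hP3card : P3.card = q ^ 3 := by
      simp only [hP3, Finset.card_product, Finset.card_range]; ring
    have h1 : B1.card ≤ q ^ 3 := hP3card ▸ Finset.card_image_le
    have h2 : B2.card ≤ q ^ 3 := hP3card ▸ Finset.card_image_le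
    have h3 : B3.card ≤ q ^ 3 := hP3card ▸ Finset.card_image_le
    have h4 : B4.card ≤ q ^ 3 := hP3card ▸ Finset.card_image_le
    calc B.card ≤ (B1 ∪ B2 ∪ B3).card + B4.card := Finset.card_union_le _ _
      _ ≤ ((B1 ∪ B2).card + B3.card) + B4.card := by
          gcongr; exact Finset.card_union_le _ _
      _ ≤ ((B1.card + B2.card) + B3.card) + B4.card := by
          gcongr; exact Finset.card_union_le _ _
      _ ≤ 4 * q ^ 3 := by omega
  · -- main property
    intro p hp
    rw [hS, Finset.mem_image] at hp
    obtain ⟨ab, hab, rfl⟩ := hp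
    rw [Finset.mem_product, Finset.mem_range, Finset.mem_range] at hab
    obtain ⟨ha, hb⟩ := hab
    set a := ab.1 with haa
    set b := ab.2 with hbb
    set u1 := a % q with hu1d
    set u2 := a / q with hu2d
    set v1 := b % q with hv1d
    set v2 := b / q with hv2d
    have hu1 : u1 < q := Nat.mod_lt _ hq0
    have hv1 : v1 < q := Nat.mod_lt _ hq0
    have hu2 : u2 < q := Nat.div_lt_of_lt_mul ha
    have hv2 : v2 < q := Nat.div_lt_of_lt_mul hb
    have hadecR : (a : ℝ) = (q:ℝ) * (u2:ℝ) + (u1:ℝ) := by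
      exact_mod_cast (Nat.div_add_mod a q).symm
    have hbdecR : (b : ℝ) = (q:ℝ) * (v2:ℝ) + (v1:ℝ) := by
      exact_mod_cast (Nat.div_add_mod b q).symm
    set r : ℝ := 2*(q:ℝ)^2 + (q:ℝ)*(u2:ℝ) - (u1:ℝ) + (q:ℝ)*(v2:ℝ) - (v1:ℝ) with hr
    have hrpos : 0 < r := by
      have h1 : (u1 : ℝ) < (q:ℝ) := by exact_mod_cast hu1
      have h2 : (v1 : ℝ) < (q:ℝ) := by exact_mod_cast hv1
      have h3 : (0 : ℝ) ≤ (u2 : ℝ) := Nat.cast_nonneg _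
      have h4 : (0 : ℝ) ≤ (v2 : ℝ) := Nat.cast_nonneg _
      have h5 : (1 : ℝ) ≤ (q:ℝ) := by exact_mod_cast hq0
      have h6 : (0:ℝ) ≤ (q:ℝ) * (u2:ℝ) := by positivity
      have h7 : (0:ℝ) ≤ (q:ℝ) * (v2:ℝ) := by positivity
      nlinarith
    refine ⟨r, hrpos, ?_⟩
    have hmem1 : (u1, v1, v2) ∈ P3 := by
      simp [hP3, Finset.mem_product, hu1, hv1, hv2]
    have hmem2 : (u2, v1, v2) ∈ P3 := by
      simp [hP3, Finset.mem_product, hu2, hv1, hv2]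
    have hmem3 : (u1, u2, v1) ∈ P3 := by
      simp [hP3, Finset.mem_product, hu1, hu2, hv1]
    have hmem4 : (u1, u2, v2) ∈ P3 := by
      simp [hP3, Finset.mem_product, hu1, hu2, hv2]
    intro z hz
    simp only [sqVertices, Set.mem_insert_iff, Set.mem_singleton_iff] at hz
    rcases hz with hz | hz | hz | hz
    · refine Finset.mem_coe.mpr (hsub1 (Finset.mem_image.mpr ⟨(u1, v1, v2), hmem1, ?_⟩))
      rw [hz]
      simp only [Frot, Prod.mk.injEq, hQ]
      constructor
      · push_cast
        rw [hadecR, hbdecR, hr]; ring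
      · push_cast
        rw [hadecR, hbdecR, hr]; ring
    · refine Finset.mem_coe.mpr (hsub4 (Finset.mem_image.mpr ⟨(u1, u2, v2), hmem4, ?_⟩))
      rw [hz]
      simp only [Frot, Prod.mk.injEq, hQ]
      constructor
      · push_cast
        rw [hadecR, hbdecR, hr]; ring
      · push_cast
        rw [hadecR, hbdecR, hr]; ring
    · refine Finset.mem_coe.mpr (hsub3 (Finset.mem_image.mpr ⟨(u1, u2, v1), hmem3, ?_⟩))
      rw [hz]
      simp only [Frot, Prod.mk.injEq, hQ]
      constructor
      · push_cast
        rw [hadecR, hbdecR, hr]; ring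
      · push_cast
        rw [hadecR, hbdecR, hr]; ring
    · refine Finset.mem_coe.mpr (hsub2 (Finset.mem_image.mpr ⟨(u2, v1, v2), hmem2, ?_⟩))
      rw [hz]
      simp only [Frot, Prod.mk.injEq, hQ]
      constructor
      · push_cast
        rw [hadecR, hbdecR, hr]; ring
      · push_cast
        rw [hadecR, hbdecR, hr]; ring

theorem stmt13 : ∃ c : ℝ, 0 < c ∧ ∀ n : ℕ, ∃ B S : Finset (ℝ × ℝ),
    n ≤ S.card ∧
    (∀ p ∈ S, ∃ r > (0:ℝ), sqVertices p r ⊆ (B : Set (ℝ × ℝ))) ∧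
    c * (B.card : ℝ) ^ ((4:ℝ) / 3) ≤ (S.card : ℝ) := by
  refine ⟨1/8, by norm_num, fun n => ?_⟩
  obtain ⟨B, S, hScard, hBcard, hmain⟩ := main_construction (n + 1)
  refine ⟨B, S, ?_, hmain, ?_⟩
  · rw [hScard]
    calc n ≤ n + 1 := Nat.le_succ n
      _ ≤ (n + 1) ^ 4 := Nat.le_self_pow (by norm_num) _
  · set q : ℕ := n + 1 with hqd
    have hq1 : (1 : ℝ) ≤ (q : ℝ) := by exact_mod_cast Nat.one_le_iff_ne_zero.mpr (by omega)
    have hBR : (B.card : ℝ) ≤ 4 * (q : ℝ) ^ 3 := by exact_mod_cast hBcard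
    have h0 : (0:ℝ) ≤ (B.card : ℝ) := Nat.cast_nonneg _
    have step1 : (B.card : ℝ) ^ ((4:ℝ)/3) ≤ (4 * (q:ℝ)^3) ^ ((4:ℝ)/3) :=
      Real.rpow_le_rpow h0 hBR (by norm_num)
    have step2 : (4 * (q:ℝ)^3) ^ ((4:ℝ)/3) = (4:ℝ) ^ ((4:ℝ)/3) * ((q:ℝ)^3) ^ ((4:ℝ)/3) :=
      Real.mul_rpow (by norm_num) (by positivity)
    have step3 : ((q:ℝ)^3) ^ ((4:ℝ)/3) = (q:ℝ) ^ (4:ℕ) := by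
      rw [← Real.rpow_natCast (q:ℝ) 3, ← Real.rpow_mul (by positivity),
        ← Real.rpow_natCast (q:ℝ) 4]
      norm_num
    have step4 : (4:ℝ) ^ ((4:ℝ)/3) ≤ 8 := by
      have hx : ((4:ℝ) ^ ((4:ℝ)/3)) ^ (3:ℕ) = 256 := by
        rw [← Real.rpow_natCast ((4:ℝ) ^ ((4:ℝ)/3)) 3, ← Real.rpow_mul (by norm_num)]
        norm_num
      have hxpos : (0:ℝ) ≤ (4:ℝ) ^ ((4:ℝ)/3) := Real.rpow_nonneg (by norm_num) _
      nlinarith [hx, hxpos, sq_nonneg ((4:ℝ) ^ ((4:ℝ)/3) - 8), sq_nonneg ((4:ℝ) ^ ((4:ℝ)/3) + 8)]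
    rw [hScard]
    push_cast
    calc (1/8 : ℝ) * (B.card : ℝ) ^ ((4:ℝ)/3)
        ≤ (1/8) * ((4:ℝ) ^ ((4:ℝ)/3) * ((q:ℝ)^3) ^ ((4:ℝ)/3)) := by
          rw [← step2]; linarith [step1]
      _ ≤ (1/8) * (8 * (q:ℝ) ^ (4:ℕ)) := by
          rw [step3]
          have hqpow : (0:ℝ) ≤ (q:ℝ) ^ (4:ℕ) := by positivity
          nlinarith [step4, hqpow]
      _ = (q:ℝ) ^ (4:ℕ) := by ring
      _ ≤ ((n:ℝ) + 1) ^ 4 := by rw [hqd]; push_cast; norm_num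
    simp [hqd]
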